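/- Let v be any matrix with entries in 𝒪 such that v_{i,j} ∈ t^{λ_i − λ_j}𝒪 for all 1 ≤ i < j ≤ n+1, and set u = x⁻¹ v x. Then for all 1 ≤ i < j ≤ n+1: if i = p, or if i < p and p < j ≤ q+1, then u_{i,j} ∈ t^{λ_i − λ_j − N}𝒪; in all other cases u_{i,j} ∈ t^{λ_i − λ_j}𝒪. (These are the minimal-valuation bounds of List 4.2, cases (B)–(E).) -/

import Mathlib

open Matrix

noncomputable section

/-- The ring `𝒪 = ℂ[[t]]` of formal power series. -/
abbrev OO : Type := PowerSeries ℂ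

/-- The field `K = ℂ((t))` of formal Laurent series. -/
abbrev KK : Type := LaurentSeries ℂ

/-- `t^k ∈ K` for an integer `k`. -/
def tz (k : ℤ) : KK := HahnSeries.single k 1

/-- The inclusion `𝒪 → K`. -/
def coeO : OO →+* KK := HahnSeries.ofPowerSeries ℤ ℂ

/-- `f` belongs to the `𝒪`-lattice `t^k 𝒪 ⊆ K`. -/
def memT (k : ℤ) (f : KK) : Prop := ∃ w : OO, f = tz k * coeO w

/-- The matrix `x = I + Σ_{j=p+1}^{q+1} t^{λ_p − λ_j − N} E_{p,j}` (indices `0`-based). -/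
def xMat (n N p q : ℕ) (lam : ℕ → ℤ) : Matrix (Fin (n+1)) (Fin (n+1)) KK :=
  Matrix.of fun i j =>
    if i = j then 1
    else if (i : ℕ) = p ∧ p < (j : ℕ) ∧ (j : ℕ) ≤ q + 1 then tz (lam p - lam j - N)
    else 0

lemma tz_mul (a b : ℤ) : tz a * tz b = tz (a + b) := by
  simp [tz, HahnSeries.single_mul_single]

lemma coeO_X_pow (m : ℕ) : coeO (PowerSeries.X ^ m) = tz m := by
  rw [map_pow]
  induction m with
  | zero => simp [tz]
  | succ m ih =>
    rw [pow_succ, ih]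
    have : coeO PowerSeries.X = tz 1 := by
      simp [coeO, tz, HahnSeries.ofPowerSeries_X]
    rw [this, tz_mul]; norm_num

lemma memT_zero (k : ℤ) : memT k 0 := ⟨0, by simp⟩

lemma memT_mono {k k' : ℤ} (h : k' ≤ k) {f : KK} (hf : memT k f) : memT k' f := by
  obtain ⟨w, hw⟩ := hf
  refine ⟨PowerSeries.X ^ (k - k').toNat * w, ?_⟩
  rw [hw, _root_.map_mul, coeO_X_pow, ← mul_assoc, mul_comm (tz k'), tz_mul]
  congr 2
  omega

lemma memT_add {k : ℤ} {f g : KK} (hf : memT k f) (hg : memT k g) : memT k (f + g) := by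
  obtain ⟨w, hw⟩ := hf; obtain ⟨w', hw'⟩ := hg
  exact ⟨w + w', by rw [hw, hw', map_add, mul_add]⟩

lemma memT_neg {k : ℤ} {f : KK} (hf : memT k f) : memT k (-f) := by
  obtain ⟨w, hw⟩ := hf; exact ⟨-w, by rw [hw, map_neg]; ring⟩

lemma memT_mul {k m : ℤ} {f g : KK} (hf : memT k f) (hg : memT m g) : memT (k + m) (f * g) := by
  obtain ⟨w, hw⟩ := hf; obtain ⟨w', hw'⟩ := hg
  refine ⟨w * w', ?_⟩
  rw [hw, hw', _root_.map_mul, ← tz_mul]; ring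

lemma memT_tz (k : ℤ) : memT k (tz k) := ⟨1, by simp⟩

lemma memT_sum {k : ℤ} {α : Type*} (s : Finset α) (f : α → KK)
    (h : ∀ a ∈ s, memT k (f a)) : memT k (∑ a ∈ s, f a) := by
  classical
  induction s using Finset.induction with
  | empty => simpa using memT_zero k
  | insert _ _ hx ih =>
    rw [Finset.sum_insert hx]
    exact memT_add (h _ (Finset.mem_insert_self _ _))
      (ih fun a ha => h a (Finset.mem_insert_of_mem ha))

/-- The strictly upper-triangular part of `xMat`. -/
def nMat (n N p q : ℕ) (lam : ℕ → ℤ) : Matrix (Fin (n+1)) (Fin (n+1)) KK :=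
  Matrix.of fun i j =>
    if (i : ℕ) = p ∧ p < (j : ℕ) ∧ (j : ℕ) ≤ q + 1 then tz (lam p - lam j - N) else 0

lemma xMat_eq (n N p q : ℕ) (lam : ℕ → ℤ) :
    xMat n N p q lam = 1 + nMat n N p q lam := by
  ext i j
  simp only [xMat, nMat, Matrix.of_apply, Matrix.add_apply, Matrix.one_apply]
  by_cases h : i = j
  · subst h
    rw [if_pos rfl, if_pos rfl, if_neg (by omega)]
    simp
  · rw [if_neg h, if_neg h, zero_add]

lemma nMat_sq (n N p q : ℕ) (lam : ℕ → ℤ) :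
    nMat n N p q lam * nMat n N p q lam = 0 := by
  refine Matrix.ext fun i j => ?_
  simp only [Matrix.mul_apply, Matrix.zero_apply, nMat, Matrix.of_apply]
  apply Finset.sum_eq_zero
  intro a _
  by_cases h : (a : ℕ) = p
  · rw [if_neg, zero_mul]
    rintro ⟨-, h2, -⟩
    omega
  · simp [h]

lemma xMat_inv (n N p q : ℕ) (lam : ℕ → ℤ) :
    (xMat n N p q lam)⁻¹ = 1 - nMat n N p q lam := by
  apply Matrix.inv_eq_right_inv
  rw [xMat_eq]
  have : (1 + nMat n N p q lam) * (1 - nMat n N p q lam)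
      = 1 - nMat n N p q lam * nMat n N p q lam := by
    rw [add_mul, one_mul, mul_sub, mul_one]; abel
  rw [this, nMat_sq, sub_zero]

lemma yMat_apply (n N p q : ℕ) (lam : ℕ → ℤ) (i a : Fin (n+1)) :
    (1 - nMat n N p q lam) i a =
      (if i = a then 1 else 0) -
        (if (i : ℕ) = p ∧ p < (a : ℕ) ∧ (a : ℕ) ≤ q + 1 then tz (lam p - lam a - N) else 0) := by
  simp [nMat, Matrix.sub_apply, Matrix.one_apply]

lemma xMat_apply (n N p q : ℕ) (lam : ℕ → ℤ) (b j : Fin (n+1)) :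
    xMat n N p q lam b j =
      if b = j then 1
      else if (b : ℕ) = p ∧ p < (j : ℕ) ∧ (j : ℕ) ≤ q + 1 then tz (lam p - lam j - N)
      else 0 := rfl

/-- the minimal-valuation bounds for `u = x⁻¹ v x` (List 4.2, cases (B)–(E)).
For `i < j`: if `i = p`, or if `i < p` and `p < j ≤ q+1`, then `u_{i,j} ∈ t^{λ_i−λ_j−N}𝒪`;
in all other cases `u_{i,j} ∈ t^{λ_i−λ_j}𝒪`.
(Indices are `0`-based: rows and columns run through `0,…,n`, and `0 ≤ p ≤ q ≤ n−1`.) -/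
theorem stmt5 (n : ℕ) (hn : 1 ≤ n) (N : ℕ) (hN : 1 ≤ N)
    (p q : ℕ) (hpq : p ≤ q) (hq : q < n)
    (lam : ℕ → ℤ)
    (hlam : ∀ i j : ℕ, i ≤ j → j ≤ n → lam j ≤ lam i)
    (h2a : (N : ℤ) ≤ lam p - lam (p + 1)) (h2b : (N : ℤ) ≤ lam q - lam (q + 1))
    (v : Matrix (Fin (n+1)) (Fin (n+1)) KK)
    (hvO : ∀ i j : Fin (n+1), memT 0 (v i j))
    (hvlam : ∀ i j : Fin (n+1), i < j → memT (lam i - lam j) (v i j)) :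
    ∀ i j : Fin (n+1), i < j →
      (((i : ℕ) = p ∨ ((i : ℕ) < p ∧ p < (j : ℕ) ∧ (j : ℕ) ≤ q + 1)) →
        memT (lam i - lam j - N) (((xMat n N p q lam)⁻¹ * v * xMat n N p q lam) i j)) ∧
      (¬ ((i : ℕ) = p ∨ ((i : ℕ) < p ∧ p < (j : ℕ) ∧ (j : ℕ) ≤ q + 1)) →
        memT (lam i - lam j) (((xMat n N p q lam)⁻¹ * v * xMat n N p q lam) i j)) := by
  intro i j hij
  have hij' : (i : ℕ) < (j : ℕ) := hij
  have hjn : (j : ℕ) ≤ n := Nat.lt_succ_iff.mp j.isLt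
  rw [xMat_inv]
  constructor
  · -- special cases: bound λ_i − λ_j − N
    intro hsp
    simp only [Matrix.mul_apply, Finset.sum_mul]
    apply memT_sum; intro b _
    apply memT_sum; intro a _
    rw [yMat_apply, xMat_apply]
    by_cases hai : i = a
    · subst hai
      rw [if_pos rfl, if_neg (by rintro ⟨h1, h2, -⟩; omega), sub_zero, one_mul]
      by_cases hbj : b = j
      · subst hbj
        rw [if_pos rfl, mul_one]
        exact memT_mono (by omega) (hvlam i b hij)
      · rw [if_neg hbj]
        by_cases hnb : (b : ℕ) = p ∧ p < (j : ℕ) ∧ (j : ℕ) ≤ q + 1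
        · rw [if_pos hnb]
          rcases hsp with hip | ⟨hip, hpj, hjq⟩
          · -- i = p = b
            have hib : i = b := Fin.ext (by omega)
            have e1 : lam (i : ℕ) = lam p := by rw [hip]
            exact memT_mono (by omega) (memT_mul (hvO i b) (memT_tz _))
          · -- i < p = b
            have hib : i < b := by rw [Fin.lt_def]; omega
            have e1 : lam (b : ℕ) = lam p := by rw [hnb.1]
            exact memT_mono (by omega) (memT_mul (hvlam i b hib) (memT_tz _))
        · rw [if_neg hnb, mul_zero]; exact memT_zero _
    · rw [if_neg hai]
      by_cases hna : (i : ℕ) = p ∧ p < (a : ℕ) ∧ (a : ℕ) ≤ q + 1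
      · rw [if_pos hna, zero_sub]
        have hneg : memT (lam p - lam (a : ℕ) - N) (-tz (lam p - lam (a : ℕ) - N)) :=
          memT_neg (memT_tz _)
        have e1 : lam (i : ℕ) = lam p := by rw [hna.1]
        have han : (a : ℕ) ≤ n := by omega
        have haP : lam (a : ℕ) ≤ lam (p + 1) := hlam (p + 1) (a : ℕ) (by omega) han
        by_cases hbj : b = j
        · subst hbj
          rw [if_pos rfl, mul_one]
          by_cases haj : (a : ℕ) < (b : ℕ)
          · have h2 : a < b := by rw [Fin.lt_def]; omega
            exact memT_mono (by omega) (memT_mul hneg (hvlam a b h2))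
          · have hja : lam (a : ℕ) ≤ lam (b : ℕ) := hlam (b : ℕ) (a : ℕ) (by omega) han
            exact memT_mono (by omega) (memT_mul hneg (hvO a b))
        · rw [if_neg hbj]
          by_cases hnb : (b : ℕ) = p ∧ p < (j : ℕ) ∧ (j : ℕ) ≤ q + 1
          · rw [if_pos hnb]
            exact memT_mono (by omega)
              (memT_mul (memT_mul hneg (hvO a b)) (memT_tz _))
          · rw [if_neg hnb, mul_zero]; exact memT_zero _
      · rw [if_neg hna, sub_zero, zero_mul, zero_mul]; exact memT_zero _
  · -- generic cases: bound λ_i − λ_j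
    intro hgen
    simp only [Matrix.mul_apply, Finset.sum_mul]
    apply memT_sum; intro b _
    apply memT_sum; intro a _
    rw [yMat_apply, xMat_apply]
    have hip : (i : ℕ) ≠ p := fun h => hgen (Or.inl h)
    by_cases hai : i = a
    · subst hai
      rw [if_pos rfl, if_neg (by rintro ⟨h1, -, -⟩; exact hip h1), sub_zero, one_mul]
      by_cases hbj : b = j
      · subst hbj
        rw [if_pos rfl, mul_one]
        exact hvlam i b hij
      · rw [if_neg hbj]
        by_cases hnb : (b : ℕ) = p ∧ p < (j : ℕ) ∧ (j : ℕ) ≤ q + 1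
        · rw [if_pos hnb]
          have hpi : p < (i : ℕ) := by
            rcases Nat.lt_trichotomy (i : ℕ) p with h | h | h
            · exact absurd (Or.inr ⟨h, hnb.2.1, hnb.2.2⟩) hgen
            · exact absurd h hip
            · exact h
          have hin : (i : ℕ) ≤ n := by omega
          have hiP : lam (i : ℕ) ≤ lam (p + 1) := hlam (p + 1) (i : ℕ) (by omega) hin
          exact memT_mono (by omega) (memT_mul (hvO i b) (memT_tz _))
        · rw [if_neg hnb, mul_zero]; exact memT_zero _
    · rw [if_neg hai, if_neg (by rintro ⟨h1, -, -⟩; exact hip h1), sub_zero,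
        zero_mul, zero_mul]
      exact memT_zero _
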